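/- Let q ≥ 1, let Σ = {x ∈ ℝ^{q+1} : x₁ + … + x_{q+1} = 0}, let δ⃗ = (d₁,…,d_{q+1}) with all d_i ≥ 1, and let F ⊆ Σ be a bounded set. Define F(T) = F + δ⃗·(−∞, log T] for T > 0. Then the boundary of exp(F(1)) (where exp acts coordinatewise) satisfies ∂(exp(F(1))) = exp(∂(F(1)))∪{0} = exp(∂F + (−∞,0]δ⃗) ∪ exp(F̄) ∪ {0}, where F̄ is the topological closure of F in Σ and ∂(F(1)) = (∂F + (−∞,0]δ⃗) ∪ F̄. -/

import Mathlib

/-- The boundary of `F` relative to the hyperplane `Σ = {x : Σᵢ xᵢ = 0}` of `ℝ^{q+1}`,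
viewed as a subset of `ℝ^{q+1}`. -/
def relBoundary (q : ℕ) (F : Set (Fin (q + 1) → ℝ)) : Set (Fin (q + 1) → ℝ) :=
  Subtype.val ''
    frontier (Subtype.val ⁻¹' F : Set ↥{x : Fin (q + 1) → ℝ | ∑ i, x i = 0})

open Set Topology Filter


noncomputable def stmtPhi (q : ℕ) (δ : Fin (q+1) → ℝ) (hd : (∑ i, δ i) ≠ 0) :
    (Fin (q+1) → ℝ) ≃ₜ ↥{x : Fin (q + 1) → ℝ | ∑ i, x i = 0} × ℝ where
  toFun y := (⟨y - ((∑ i, y i) / (∑ i, δ i)) • δ, by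
      simp only [Set.mem_setOf_eq, Pi.sub_apply, Pi.smul_apply, smul_eq_mul,
        Finset.sum_sub_distrib, ← Finset.mul_sum]
      field_simp; ring⟩, (∑ i, y i) / (∑ i, δ i))
  invFun p := p.1.val + p.2 • δ
  left_inv y := by simp
  right_inv p := by
    obtain ⟨⟨x, hx⟩, t⟩ := p
    have hx' : (∑ i, x i) = 0 := hx
    have hc : (∑ i, (x i + t * δ i)) / (∑ i, δ i) = t := by
      rw [Finset.sum_add_distrib, hx', zero_add, ← Finset.mul_sum,
        mul_div_assoc, div_self hd, mul_one]
    ext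
    · simp only [Pi.add_apply, Pi.smul_apply, smul_eq_mul, Pi.sub_apply, hc]
      ring
    · simpa using hc
  continuous_toFun := by
    have csum : Continuous (fun y : Fin (q+1) → ℝ => ∑ i, y i) :=
      continuous_finset_sum _ (fun i _ => continuous_apply i)
    refine Continuous.prodMk (Continuous.subtype_mk ?_ _) (csum.div_const _)
    exact continuous_id.sub ((csum.div_const _).smul continuous_const)
  continuous_invFun := by
    fun_prop

lemma stmt19_part1 (q : ℕ)
    (δ : Fin (q + 1) → ℝ) (hδ : ∀ i, 1 ≤ δ i)
    (F : Set (Fin (q + 1) → ℝ)) (hFsum : ∀ x ∈ F, ∑ i, x i = 0)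
    (F1 : Set (Fin (q + 1) → ℝ))
    (hF1 : F1 = {y | ∃ x ∈ F, ∃ t ≤ (0 : ℝ), y = x + t • δ}) :
    frontier F1 =
      {y | ∃ x ∈ relBoundary q F, ∃ t ≤ (0 : ℝ), y = x + t • δ} ∪ closure F := by
  have hd0 : 0 < ∑ i, δ i :=
    Finset.sum_pos (fun i _ => zero_lt_one.trans_le (hδ i)) Finset.univ_nonempty
  have hd : (∑ i, δ i) ≠ 0 := ne_of_gt hd0
  set Φ := stmtPhi q δ hd with hΦ
  have h1 : ∀ y, ((Φ y).1 : Fin (q+1) → ℝ) = y - ((∑ i, y i)/(∑ i, δ i)) • δ :=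
    fun y => rfl
  have h2 : ∀ y, (Φ y).2 = (∑ i, y i)/(∑ i, δ i) := fun y => rfl
  have csum : Continuous (fun y : Fin (q+1) → ℝ => ∑ i, y i) :=
    continuous_finset_sum _ (fun i _ => continuous_apply i)
  have hSigC : IsClosed {x : Fin (q + 1) → ℝ | ∑ i, x i = 0} :=
    isClosed_eq csum continuous_const
  have hclF : closure F ⊆ {x : Fin (q + 1) → ℝ | ∑ i, x i = 0} :=
    closure_minimal hFsum hSigC
  -- closure of preimage
  have hpre : closure (Subtype.val ⁻¹' F :
        Set ↥{x : Fin (q + 1) → ℝ | ∑ i, x i = 0}) = Subtype.val ⁻¹' closure F := by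
    have hFi : {x : Fin (q+1) → ℝ | ∑ i, x i = 0} ∩ F = F :=
      Set.inter_eq_right.mpr hFsum
    rw [Topology.IsEmbedding.subtypeVal.closure_eq_preimage_closure_image,
      Subtype.image_preimage_coe, hFi]
  -- sum along F1 elements
  have hsum : ∀ (x : Fin (q+1) → ℝ) (t : ℝ), (∑ i, x i) = 0 →
      (∑ i, (x + t • δ) i) = t * ∑ i, δ i := by
    intro x t hx
    simp only [Pi.add_apply, Pi.smul_apply, smul_eq_mul, Finset.sum_add_distrib, hx,
      ← Finset.mul_sum, zero_add]
  have hF1' : F1 = Φ ⁻¹' ((Subtype.val ⁻¹' F) ×ˢ Iic 0) := by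
    rw [hF1]
    ext y
    simp only [Set.mem_setOf_eq, Set.mem_preimage, Set.mem_prod, Set.mem_Iic, h2]
    constructor
    · rintro ⟨x, hx, t, ht, rfl⟩
      have hc : (∑ i, (x + t • δ) i) / (∑ i, δ i) = t := by
        rw [hsum x t (hFsum x hx), mul_div_assoc, div_self hd, mul_one]
      refine ⟨?_, by rw [hc]; exact ht⟩
      show ((Φ (x + t • δ)).1 : Fin (q+1) → ℝ) ∈ F
      rw [h1, hc]
      simpa using hx
    · rintro ⟨hmem, hc⟩
      refine ⟨((Φ y).1 : Fin (q+1) → ℝ), hmem, (∑ i, y i)/(∑ i, δ i), hc, ?_⟩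
      rw [h1]
      abel
  have hfr : frontier ((Subtype.val ⁻¹' F :
        Set ↥{x : Fin (q + 1) → ℝ | ∑ i, x i = 0}) ×ˢ Iic (0:ℝ)) =
      (Subtype.val ⁻¹' closure F) ×ˢ ({0} : Set ℝ) ∪
        frontier (Subtype.val ⁻¹' F :
          Set ↥{x : Fin (q + 1) → ℝ | ∑ i, x i = 0}) ×ˢ Iic 0 := by
    rw [frontier_prod_eq, frontier_Iic, closure_Iic, hpre]
  rw [hF1', ← Homeomorph.preimage_frontier, hfr]
  ext y
  simp only [Set.mem_preimage, Set.mem_union, Set.mem_prod, Set.mem_Iic,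
    Set.mem_singleton_iff, Set.mem_setOf_eq, h2]
  constructor
  · rintro (⟨hcl, hc0⟩ | ⟨hfr', hc⟩)
    · right
      have : ((Φ y).1 : Fin (q+1) → ℝ) ∈ closure F := hcl
      rw [h1, hc0, zero_smul, sub_zero] at this
      exact this
    · left
      exact ⟨((Φ y).1 : Fin (q+1) → ℝ), ⟨(Φ y).1, hfr', rfl⟩,
        (∑ i, y i)/(∑ i, δ i), hc, by rw [h1]; abel⟩
  · rintro (⟨x, ⟨x', hx', hval⟩, t, ht, rfl⟩ | hycl)
    · right
      have hx0 : ∑ i, x i = 0 := by rw [← hval]; exact x'.2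
      have hc : (∑ i, (x + t • δ) i) / (∑ i, δ i) = t := by
        rw [hsum x t hx0, mul_div_assoc, div_self hd, mul_one]
      refine ⟨?_, by rw [hc]; exact ht⟩
      have hx'' : (Φ (x + t • δ)).1 = x' := by
        apply Subtype.ext
        rw [h1, hc, hval]
        abel
      rw [hx'']
      exact hx'
    · left
      have hy0 : ∑ i, y i = 0 := hclF hycl
      refine ⟨?_, by rw [hy0, zero_div]⟩
      show ((Φ y).1 : Fin (q+1) → ℝ) ∈ closure F
      rw [h1, hy0, zero_div, zero_smul, sub_zero]
      exact hycl


noncomputable def stmtExp (q : ℕ) : (Fin (q+1) → ℝ) → (Fin (q+1) → ℝ) :=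
  fun x i => Real.exp (x i)

lemma stmtExp_inj (q : ℕ) : Function.Injective (stmtExp q) :=
  fun a b h => funext fun i => Real.exp_injective (congrFun h i)

lemma stmtExp_cont (q : ℕ) : Continuous (stmtExp q) :=
  continuous_pi fun i => Real.continuous_exp.comp (continuous_apply i)

lemma stmtExp_pos (q : ℕ) (x : Fin (q+1) → ℝ) (i : Fin (q+1)) : 0 < stmtExp q x i :=
  Real.exp_pos _

def posOrth (q : ℕ) : Set (Fin (q+1) → ℝ) := {y | ∀ i, 0 < y i}

lemma isOpen_posOrth (q : ℕ) : IsOpen (posOrth q) := by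
  have : posOrth q = ⋂ i, (fun y : Fin (q+1) → ℝ => y i) ⁻¹' Ioi 0 := by
    ext y; simp [posOrth]
  rw [this]
  exact isOpen_iInter_of_finite fun i => isOpen_Ioi.preimage (continuous_apply i)

lemma logM_contOn (q : ℕ) :
    ContinuousOn (fun (y : Fin (q+1) → ℝ) i => Real.log (y i)) (posOrth q) := by
  intro y hy
  apply ContinuousAt.continuousWithinAt
  rw [continuousAt_pi]
  intro i
  exact ContinuousAt.comp (x := y) (Real.continuousAt_log (ne_of_gt (hy i)))
    (continuous_apply i).continuousAt

lemma stmtExp_image (q : ℕ) (U : Set (Fin (q+1) → ℝ)) :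
    stmtExp q '' U = posOrth q ∩ (fun (y : Fin (q+1) → ℝ) i => Real.log (y i)) ⁻¹' U := by
  ext y
  constructor
  · rintro ⟨x, hx, rfl⟩
    refine ⟨fun i => Real.exp_pos _, ?_⟩
    show (fun i => Real.log (stmtExp q x i)) ∈ U
    convert hx using 1
    funext i
    exact Real.log_exp _
  · rintro ⟨hp, hu⟩
    refine ⟨fun i => Real.log (y i), hu, funext fun i => ?_⟩
    simp only [stmtExp]
    exact Real.exp_log (hp i)

lemma stmtExp_isOpenMap (q : ℕ) : IsOpenMap (stmtExp q) := by
  intro U hU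
  rw [stmtExp_image]
  exact (logM_contOn q).isOpen_inter_preimage (isOpen_posOrth q) hU

lemma stmtExp_interior (q : ℕ) (s : Set (Fin (q+1) → ℝ)) :
    interior (stmtExp q '' s) = stmtExp q '' interior s := by
  refine Set.Subset.antisymm ?_ ((stmtExp_isOpenMap q).image_interior_subset s)
  intro y hy
  obtain ⟨x, hx, rfl⟩ := interior_subset hy
  refine ⟨x, ?_, rfl⟩
  rw [mem_interior]
  refine ⟨stmtExp q ⁻¹' interior (stmtExp q '' s), ?_,
    isOpen_interior.preimage (stmtExp_cont q), hy⟩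
  intro z hz
  obtain ⟨w, hw, hwz⟩ := interior_subset (Set.mem_preimage.mp hz)
  rwa [← stmtExp_inj q hwz]

lemma stmtExp_closure (q : ℕ) (δ : Fin (q + 1) → ℝ) (hδ : ∀ i, 1 ≤ δ i)
    (F : Set (Fin (q + 1) → ℝ)) (hFbd : Bornology.IsBounded F) (hFne : F.Nonempty)
    (F1 : Set (Fin (q + 1) → ℝ))
    (hF1 : F1 = {y | ∃ x ∈ F, ∃ t ≤ (0 : ℝ), y = x + t • δ}) :
    closure (stmtExp q '' F1) = (stmtExp q '' closure F1) ∪ {0} := by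
  obtain ⟨C, hC⟩ := isBounded_iff_forall_norm_le.mp hFbd
  have hcoord : ∀ x ∈ F, ∀ j, |x j| ≤ C := by
    intro x hx j
    calc |x j| = ‖x j‖ := (Real.norm_eq_abs _).symm
    _ ≤ ‖x‖ := norm_le_pi_norm x j
    _ ≤ C := hC x hx
  apply Set.Subset.antisymm
  · -- closure ⊆ image of closure ∪ {0}
    intro y hy
    by_cases hyp : ∀ i, 0 < y i
    · left
      have hlogC : ContinuousAt (fun (z : Fin (q+1) → ℝ) i => Real.log (z i)) y := by
        rw [continuousAt_pi]
        intro i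
        exact ContinuousAt.comp (x := y) (Real.continuousAt_log (ne_of_gt (hyp i)))
          (continuous_apply i).continuousAt
      have hmem := hlogC.continuousWithinAt.mem_closure_image hy
      have himg : (fun (z : Fin (q+1) → ℝ) i => Real.log (z i)) '' (stmtExp q '' F1)
          = F1 := by
        rw [← Set.image_comp]
        have : ((fun (z : Fin (q+1) → ℝ) i => Real.log (z i)) ∘ stmtExp q) = id := by
          funext x i
          exact Real.log_exp _
        rw [this, Set.image_id]
      rw [himg] at hmem
      exact ⟨_, hmem, funext fun i => Real.exp_log (hyp i)⟩
    · right
      push_neg at hyp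
      obtain ⟨i, hyi⟩ := hyp
      obtain ⟨z, hz, hzy⟩ := mem_closure_iff_seq_limit.mp hy
      have hz' : ∀ n, ∃ x ∈ F, ∃ t ≤ (0:ℝ), z n = stmtExp q (x + t • δ) := by
        intro n
        obtain ⟨w, hw, hwz⟩ := hz n
        rw [hF1] at hw
        obtain ⟨x, hx, t, ht, rfl⟩ := hw
        exact ⟨x, hx, t, ht, hwz.symm⟩
      choose x hxF t ht hzn using hz'
      have hzco : ∀ n j, z n j = Real.exp (x n j + t n * δ j) := by
        intro n j
        rw [hzn n]
        rfl
      have hzyj : ∀ j, Tendsto (fun n => z n j) atTop (𝓝 (y j)) :=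
        fun j => tendsto_pi_nhds.mp hzy j
      -- y i = 0
      have hyi0 : y i = 0 := by
        refine le_antisymm hyi ?_
        refine ge_of_tendsto (hzyj i) (Eventually.of_forall fun n => ?_)
        rw [hzco n i]
        exact (Real.exp_pos _).le
      -- log of i-th coordinate tendsto atBot
      have hlog : Tendsto (fun n => x n i + t n * δ i) atTop atBot := by
        have h1 : Tendsto (fun n => z n i) atTop (𝓝[>] 0) := by
          rw [tendsto_nhdsWithin_iff]
          refine ⟨by rw [← hyi0]; exact hzyj i, Eventually.of_forall fun n => ?_⟩
          rw [hzco n i]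
          exact Real.exp_pos _
        have h2 := Real.tendsto_log_nhdsGT_zero.comp h1
        refine h2.congr fun n => ?_
        simp only [Function.comp_apply, hzco n i, Real.log_exp]
      -- t n * δ i tendsto atBot
      have htd : Tendsto (fun n => t n * δ i) atTop atBot := by
        refine tendsto_atBot_mono (fun n => ?_) (tendsto_atBot_add_const_right _ C hlog)
        have := (abs_le.mp (hcoord (x n) (hxF n) i)).1
        linarith
      -- t tendsto atBot
      have hdi : (0:ℝ) < δ i := zero_lt_one.trans_le (hδ i)
      have htb : Tendsto t atTop atBot := by
        have := htd.atBot_div_const hdi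
        refine this.congr fun n => ?_
        field_simp
      -- every coordinate of y is 0
      have : ∀ j, y j = 0 := by
        intro j
        have hj : Tendsto (fun n => x n j + t n * δ j) atTop atBot := by
          refine tendsto_atBot_mono (fun n => ?_) (tendsto_atBot_add_const_left _ C htb)
          have h1 := (abs_le.mp (hcoord (x n) (hxF n) j)).2
          have h2 : t n * δ j ≤ t n := by nlinarith [hδ j, ht n]
          linarith
        have hexp : Tendsto (fun n => z n j) atTop (𝓝 0) := by
          have := Real.tendsto_exp_atBot.comp hj
          refine this.congr fun n => ?_
          simp only [Function.comp_apply, hzco n j]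
        exact tendsto_nhds_unique (hzyj j) hexp
      have : y = 0 := funext fun j => this j
      simp [this]
  · rintro y (⟨x, hx, rfl⟩ | hy0)
    · exact map_mem_closure (stmtExp_cont q) hx (fun w hw => Set.mem_image_of_mem _ hw)
    · -- 0 ∈ closure
      rw [Set.mem_singleton_iff.mp hy0]
      obtain ⟨x₀, hx₀⟩ := hFne
      have hseq : ∀ n : ℕ, stmtExp q (x₀ + (-(n:ℝ)) • δ) ∈ stmtExp q '' F1 := by
        intro n
        refine Set.mem_image_of_mem _ ?_
        rw [hF1]
        exact ⟨x₀, hx₀, -(n:ℝ), neg_nonpos.mpr (Nat.cast_nonneg n), rfl⟩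
      refine mem_closure_of_tendsto (b := (atTop : Filter ℕ)) (f := fun n : ℕ => stmtExp q (x₀ + (-(n:ℝ)) • δ))
        ?_ (Eventually.of_forall hseq)
      rw [tendsto_pi_nhds]
      intro j
      have harg : Tendsto (fun n : ℕ => x₀ j + -(n:ℝ) * δ j) atTop atBot := by
        refine tendsto_atBot_mono (fun n => ?_)
          (tendsto_atBot_add_const_left _ (x₀ j)
            (tendsto_neg_atTop_atBot.comp tendsto_natCast_atTop_atTop))
        have := hδ j
        have hn : (0:ℝ) ≤ (n:ℝ) := Nat.cast_nonneg n
        simp only [Function.comp_apply]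
        nlinarith
      have := Real.tendsto_exp_atBot.comp harg
      refine Tendsto.congr (fun n => rfl) this

lemma stmtExp_frontier (q : ℕ) (δ : Fin (q + 1) → ℝ) (hδ : ∀ i, 1 ≤ δ i)
    (F : Set (Fin (q + 1) → ℝ)) (hFbd : Bornology.IsBounded F) (hFne : F.Nonempty)
    (F1 : Set (Fin (q + 1) → ℝ))
    (hF1 : F1 = {y | ∃ x ∈ F, ∃ t ≤ (0 : ℝ), y = x + t • δ}) :
    frontier (stmtExp q '' F1) = (stmtExp q '' frontier F1) ∪ {0} := by
  have h0 : (0 : Fin (q+1) → ℝ) ∉ stmtExp q '' interior F1 := by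
    rintro ⟨x, hx, hx0⟩
    have := congrFun hx0 ⟨0, Nat.succ_pos q⟩
    exact absurd this (ne_of_gt (Real.exp_pos _))
  have hfr : frontier (stmtExp q '' F1) =
      closure (stmtExp q '' F1) \ interior (stmtExp q '' F1) := rfl
  rw [hfr, stmtExp_closure q δ hδ F hFbd hFne F1 hF1, stmtExp_interior q F1,
    Set.union_diff_distrib, ← Set.image_diff (stmtExp_inj q)]
  have h2 : closure F1 \ interior F1 = frontier F1 := rfl
  rw [h2]
  congr 1
  ext y
  simp only [Set.mem_diff, Set.mem_singleton_iff, and_iff_left_iff_imp]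
  rintro rfl
  exact h0

/-- Decomposition of the boundary of `exp(F(1))`: for `q ≥ 1`, `δ⃗` with all `dᵢ ≥ 1`,
and a nonempty bounded set `F ⊆ Σ`, with `F(1) = F + δ⃗·(−∞,0]`, one has
`∂(F(1)) = (∂F + (−∞,0]δ⃗) ∪ F̄` and
`∂(exp(F(1))) = exp(∂(F(1))) ∪ {0} = exp(∂F + (−∞,0]δ⃗) ∪ exp(F̄) ∪ {0}`,
where `∂F` is the boundary of `F` relative to `Σ` and `exp` acts coordinatewise. -/
theorem stmt19 (q : ℕ) (hq : 1 ≤ q)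
    (δ : Fin (q + 1) → ℝ) (hδ : ∀ i, 1 ≤ δ i)
    (F : Set (Fin (q + 1) → ℝ)) (hFsum : ∀ x ∈ F, ∑ i, x i = 0)
    (hFbd : Bornology.IsBounded F) (hFne : F.Nonempty)
    (F1 : Set (Fin (q + 1) → ℝ))
    (hF1 : F1 = {y | ∃ x ∈ F, ∃ t ≤ (0 : ℝ), y = x + t • δ})
    (expMap : (Fin (q + 1) → ℝ) → (Fin (q + 1) → ℝ))
    (hexp : expMap = fun x i => Real.exp (x i)) :
    frontier F1 =
        {y | ∃ x ∈ relBoundary q F, ∃ t ≤ (0 : ℝ), y = x + t • δ} ∪ closure F ∧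
      frontier (expMap '' F1) = (expMap '' frontier F1) ∪ {0} ∧
      frontier (expMap '' F1) =
        (expMap '' {y | ∃ x ∈ relBoundary q F, ∃ t ≤ (0 : ℝ), y = x + t • δ}) ∪
          (expMap '' closure F) ∪ {0} := by
  have h1 := stmt19_part1 q δ hδ F hFsum F1 hF1
  have hE : expMap = stmtExp q := hexp
  have h2 : frontier (expMap '' F1) = (expMap '' frontier F1) ∪ {0} := by
    rw [hE]
    exact stmtExp_frontier q δ hδ F hFbd hFne F1 hF1
  refine ⟨h1, h2, ?_⟩
  rw [h2, h1, Set.image_union]
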